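/- Let p, q ∈ (0,1), φ ∈ [0,2π), n ≥ 1, Δp = 2p−1, Δq = 2q−1, μ₁ = √(pq), μ₂ = √((1−p)(1−q)). Let |0_p⟩, |1_p⟩ be the normalized even- and odd-parity components of (√p|0⟩ + √(1−p)|1⟩)^{⊗n}, and |0_q⟩, |1_q⟩ the normalized even- and odd-parity components of (√q|0⟩ + e^{iφ}√(1−q)|1⟩)^{⊗n}. Then ⟨0_q|0_p⟩ = ((μ₁ + e^{−iφ}μ₂)^n + (μ₁ − e^{−iφ}μ₂)^n) / √((1+Δp^n)(1+Δq^n)) and ⟨1_q|1_p⟩ = ((μ₁ + e^{−iφ}μ₂)^n − (μ₁ − e^{−iφ}μ₂)^n) / √((1−Δp^n)(1−Δq^n)). -/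

import Mathlib

open Matrix Complex Set Filter

noncomputable section

/-- Number of 1s in a bit string. -/
def ones {n : ℕ} (x : Fin n → Fin 2) : ℕ := (Finset.univ.filter fun i => x i = 1).card

/-- The `n`-fold tensor power of a one-qubit operator, as a matrix indexed by bit strings. -/
def mpow (n : ℕ) (ρ : Matrix (Fin 2) (Fin 2) ℂ) :
    Matrix (Fin n → Fin 2) (Fin n → Fin 2) ℂ :=
  Matrix.of fun x y => ∏ i, ρ (x i) (y i)

/-- The parity operator ω = σ_z^{⊗n}: it multiplies a computational basis vector by
(-1)^(number of 1s). -/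
def parityOp (n : ℕ) : Matrix (Fin n → Fin 2) (Fin n → Fin 2) ℂ :=
  Matrix.diagonal fun x => (-1 : ℂ) ^ ones x

/-- The ℤ₂-twirling Z[X] = ½ (X + ωXω). -/
def twirl {n : ℕ} (X : Matrix (Fin n → Fin 2) (Fin n → Fin 2) ℂ) :
    Matrix (Fin n → Fin 2) (Fin n → Fin 2) ℂ :=
  (2 : ℂ)⁻¹ • (X + parityOp n * X * parityOp n)

/-- Rank-one projection |ψ⟩⟨ψ| on one qubit. -/
def projv (ψ : Fin 2 → ℂ) : Matrix (Fin 2) (Fin 2) ℂ := vecMulVec ψ (star ψ)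

/-- Rank-one projection |ψ⟩⟨ψ| on n qubits. -/
def projN {n : ℕ} (ψ : (Fin n → Fin 2) → ℂ) :
    Matrix (Fin n → Fin 2) (Fin n → Fin 2) ℂ := vecMulVec ψ (star ψ)

def ket0 : Fin 2 → ℂ := ![1, 0]

def ket1 : Fin 2 → ℂ := ![0, 1]

/-- The qubit state √p |0⟩ + e^{iφ} √(1-p) |1⟩. -/
def qubit (p φ : ℝ) : Fin 2 → ℂ :=
  ![(Real.sqrt p : ℂ), Complex.exp (Complex.I * φ) * (Real.sqrt (1 - p) : ℂ)]

/-- The qubit state √p |0⟩ + √(1-p) |1⟩. -/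
def qubitR (p : ℝ) : Fin 2 → ℂ := ![(Real.sqrt p : ℂ), (Real.sqrt (1 - p) : ℂ)]

/-- |v_j⟩ = C(n,j)^{-1/2} Σ |0⟩^{⊗(n-j)}|1⟩^{⊗j}, the sum over all arrangements of
bit strings with exactly j ones. -/
def vJ (n j : ℕ) : (Fin n → Fin 2) → ℂ :=
  fun x => if ones x = j then ((Real.sqrt (n.choose j) : ℂ))⁻¹ else 0

/-- The normalized even-parity component |0_p⟩ of (√p|0⟩ + e^{iφ}√(1-p)|1⟩)^{⊗n}:
|0_p⟩ = Σ_{j even} e^{ijφ} √( C(n,j) p^{n−j}(1−p)^j / (½(1+(2p-1)^n)) ) |v_j⟩. -/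
def evenVec (n : ℕ) (p φ : ℝ) : (Fin n → Fin 2) → ℂ :=
  ∑ j ∈ (Finset.range (n + 1)).filter (fun j => Even j),
    (Complex.exp (Complex.I * φ * j) *
      (Real.sqrt ((n.choose j : ℝ) * p ^ (n - j) * (1 - p) ^ j /
        ((1 + (2 * p - 1) ^ n) / 2)) : ℂ)) • vJ n j

/-- The normalized odd-parity component |1_p⟩ of (√p|0⟩ + e^{iφ}√(1-p)|1⟩)^{⊗n}:
|1_p⟩ = Σ_{j odd} e^{ijφ} √( C(n,j) p^{n−j}(1−p)^j / (½(1-(2p-1)^n)) ) |v_j⟩. -/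
def oddVec (n : ℕ) (p φ : ℝ) : (Fin n → Fin 2) → ℂ :=
  ∑ j ∈ (Finset.range (n + 1)).filter (fun j => Odd j),
    (Complex.exp (Complex.I * φ * j) *
      (Real.sqrt ((n.choose j : ℝ) * p ^ (n - j) * (1 - p) ^ j /
        ((1 - (2 * p - 1) ^ n) / 2)) : ℂ)) • vJ n j

/-- The inner product ⟨u|v⟩ = Σ_x conj(u x) (v x). -/
def innerC {n : ℕ} (u v : (Fin n → Fin 2) → ℂ) : ℂ := dotProduct (star u) v

lemma card_ones (n j : ℕ) :
    (Finset.univ.filter fun x : Fin n → Fin 2 => ones x = j).card = n.choose j := by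
  have h := Finset.card_powersetCard j (Finset.univ : Finset (Fin n))
  rw [Finset.card_univ, Fintype.card_fin] at h
  rw [← h]
  apply Finset.card_nbij' (i := fun x => Finset.univ.filter fun i => x i = 1)
    (j := fun s i => if i ∈ s then 1 else 0)
  · intro x hx
    simp only [Finset.mem_coe, Finset.mem_filter, Finset.mem_univ, true_and] at hx
    simp [Finset.mem_powersetCard, hx, ones] at *
    exact hx
  · intro s hs
    simp only [Finset.mem_coe, Finset.mem_powersetCard] at hs
    simp only [Finset.mem_coe, Finset.mem_filter, Finset.mem_univ, true_and]; simp only [ones]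
    rw [← hs.2]
    congr 1
    ext i
    simp
  · intro x hx
    funext i
    by_cases h : x i = 1 <;> simp [h] <;> omega
  · intro s hs
    ext i
    simp

lemma innerC_vJ (n : ℕ) {j k : ℕ} (hj : j ≤ n) :
    innerC (vJ n j) (vJ n k) = if j = k then 1 else 0 := by
  have hC : (0:ℝ) < (n.choose j : ℝ) := by exact_mod_cast Nat.choose_pos hj
  unfold innerC vJ dotProduct
  rcases eq_or_ne j k with rfl | hne
  · simp only [if_pos rfl]
    have step : ∀ x : Fin n → Fin 2, star (if ones x = j then ((Real.sqrt (n.choose j):ℂ))⁻¹ else 0) *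
          (if ones x = j then ((Real.sqrt (n.choose j):ℂ))⁻¹ else 0)
        = (if ones x = j then (((n.choose j : ℝ))⁻¹ : ℂ) else 0) := by
      intro x
      by_cases h : ones x = j <;>
        simp [h, Complex.star_def, Complex.conj_ofReal, ← mul_inv, ← Complex.ofReal_mul,
          Real.mul_self_sqrt hC.le]
    simp only [Pi.star_apply, step]
    rw [← Finset.sum_filter, Finset.sum_const, card_ones, nsmul_eq_mul]
    push_cast
    exact mul_inv_cancel₀ (by exact_mod_cast hC.ne')
  · simp only [if_neg hne]
    apply Finset.sum_eq_zero
    intro x _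
    by_cases h : ones x = j
    · simp [h, hne]
    · simp [h]

lemma innerC_sum_sum {n : ℕ} (S T : Finset ℕ) (c d : ℕ → ℂ) :
    innerC (∑ j ∈ S, c j • vJ n j) (∑ k ∈ T, d k • vJ n k)
      = ∑ j ∈ S, ∑ k ∈ T, (starRingEnd ℂ) (c j) * d k * innerC (vJ n j) (vJ n k) := by
  have hU : ∀ x, star ((∑ j ∈ S, c j • vJ n j) x)
      = ∑ j ∈ S, (starRingEnd ℂ) (c j) * star (vJ n j x) := by
    intro x
    rw [Finset.sum_apply, star_sum]
    exact Finset.sum_congr rfl fun j _ => by simp [Complex.star_def]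
  have hV : ∀ x, (∑ k ∈ T, d k • vJ n k) x = ∑ k ∈ T, d k * vJ n k x := by
    intro x; simp
  unfold innerC dotProduct
  simp only [Pi.star_apply, hU, hV, Finset.mul_sum, Finset.sum_mul]
  refine Finset.sum_comm.trans ?_
  refine (Finset.sum_congr rfl fun i _ => Finset.sum_comm).trans ?_
  refine Finset.sum_comm.trans ?_
  exact Finset.sum_congr rfl fun j _ => Finset.sum_congr rfl fun i _ =>
    Finset.sum_congr rfl fun x _ => by ring

lemma innerC_diag {n : ℕ} (S : Finset ℕ) (hS : S ⊆ Finset.range (n+1)) (c d : ℕ → ℂ) :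
    innerC (∑ j ∈ S, c j • vJ n j) (∑ k ∈ S, d k • vJ n k)
      = ∑ j ∈ S, (starRingEnd ℂ) (c j) * d j := by
  rw [innerC_sum_sum]
  apply Finset.sum_congr rfl
  intro j hj
  have hjn : j ≤ n := by have := hS hj; simp at this; omega
  rw [Finset.sum_eq_single j]
  · rw [innerC_vJ n hjn, if_pos rfl, mul_one]
  · intro k _ hk
    rw [innerC_vJ n hjn, if_neg (fun h => hk h.symm), mul_zero]
  · intro h; exact absurd hj h

lemma sqrt_pow' {x : ℝ} (h : 0 ≤ x) (k : ℕ) : Real.sqrt (x ^ k) = Real.sqrt x ^ k := by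
  induction k with
  | zero => simp
  | succ k ih => rw [pow_succ, Real.sqrt_mul (pow_nonneg h k), ih, pow_succ]

lemma binom_even (w z : ℂ) (n : ℕ) :
    (∑ j ∈ (Finset.range (n+1)).filter (fun j => Even j),
      (n.choose j : ℂ) * w ^ (n - j) * z ^ j) = ((w + z) ^ n + (w - z) ^ n) / 2 := by
  have h1 : (w + z) ^ n = ∑ j ∈ Finset.range (n+1), z ^ j * w ^ (n - j) * (n.choose j) := by
    rw [add_comm w z, add_pow]
  have h2 : (w - z) ^ n = ∑ j ∈ Finset.range (n+1),
      (-1) ^ j * z ^ j * w ^ (n - j) * (n.choose j) := by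
    rw [sub_eq_add_neg, add_comm w (-z), add_pow]
    exact Finset.sum_congr rfl fun j _ => by rw [neg_pow]
  rw [h1, h2, ← Finset.sum_add_distrib, Finset.sum_filter, Finset.sum_div]
  refine Finset.sum_congr rfl fun j _ => ?_
  rcases Nat.even_or_odd j with he | ho
  · rw [if_pos he, he.neg_one_pow]; ring
  · rw [if_neg (Nat.not_even_iff_odd.mpr ho), ho.neg_one_pow]; ring

lemma binom_odd (w z : ℂ) (n : ℕ) :
    (∑ j ∈ (Finset.range (n+1)).filter (fun j => Odd j),
      (n.choose j : ℂ) * w ^ (n - j) * z ^ j) = ((w + z) ^ n - (w - z) ^ n) / 2 := by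
  have h1 : (w + z) ^ n = ∑ j ∈ Finset.range (n+1), z ^ j * w ^ (n - j) * (n.choose j) := by
    rw [add_comm w z, add_pow]
  have h2 : (w - z) ^ n = ∑ j ∈ Finset.range (n+1),
      (-1) ^ j * z ^ j * w ^ (n - j) * (n.choose j) := by
    rw [sub_eq_add_neg, add_comm w (-z), add_pow]
    exact Finset.sum_congr rfl fun j _ => by rw [neg_pow]
  rw [h1, h2, ← Finset.sum_sub_distrib, Finset.sum_filter, Finset.sum_div]
  refine Finset.sum_congr rfl fun j _ => ?_
  rcases Nat.even_or_odd j with he | ho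
  · rw [if_neg (Nat.not_odd_iff_even.mpr he), he.neg_one_pow]; ring
  · rw [if_pos ho, ho.neg_one_pow]; ring

lemma coeff_prod {p q Np Nq : ℝ} (hp0 : 0 < p) (hp1 : p < 1) (hq0 : 0 < q) (hq1 : q < 1)
    (hNp : 0 < Np) (hNq : 0 < Nq) {n j : ℕ} (hj : j ≤ n) :
    Real.sqrt ((n.choose j : ℝ) * q ^ (n - j) * (1 - q) ^ j / Nq) *
      Real.sqrt ((n.choose j : ℝ) * p ^ (n - j) * (1 - p) ^ j / Np)
    = (n.choose j : ℝ) * Real.sqrt (p * q) ^ (n - j) * Real.sqrt ((1 - p) * (1 - q)) ^ j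
        / Real.sqrt (Nq * Np) := by
  have hC : (0:ℝ) ≤ (n.choose j : ℝ) := Nat.cast_nonneg _
  have h1p : (0:ℝ) ≤ 1 - p := by linarith
  have h1q : (0:ℝ) ≤ 1 - q := by linarith
  have hAq : (0:ℝ) ≤ (n.choose j : ℝ) * q ^ (n - j) * (1 - q) ^ j :=
    mul_nonneg (mul_nonneg hC (pow_nonneg hq0.le _)) (pow_nonneg h1q _)
  have hAp : (0:ℝ) ≤ (n.choose j : ℝ) * p ^ (n - j) * (1 - p) ^ j :=
    mul_nonneg (mul_nonneg hC (pow_nonneg hp0.le _)) (pow_nonneg h1p _)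
  rw [← Real.sqrt_mul (div_nonneg hAq hNq.le)]
  have heq : (n.choose j : ℝ) * q ^ (n - j) * (1 - q) ^ j / Nq *
      ((n.choose j : ℝ) * p ^ (n - j) * (1 - p) ^ j / Np)
      = ((n.choose j : ℝ)^2 * (p * q) ^ (n - j) * ((1 - p) * (1 - q)) ^ j) / (Nq * Np) := by
    rw [mul_pow, mul_pow]
    field_simp
  have hnum : (0:ℝ) ≤ (n.choose j : ℝ)^2 * (p * q) ^ (n - j) * ((1 - p) * (1 - q)) ^ j :=
    mul_nonneg (mul_nonneg (sq_nonneg _) (pow_nonneg (mul_nonneg hp0.le hq0.le) _))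
      (pow_nonneg (mul_nonneg h1p h1q) _)
  rw [heq, Real.sqrt_div hnum]
  congr 1
  rw [Real.sqrt_mul (mul_nonneg (sq_nonneg _) (pow_nonneg (mul_nonneg hp0.le hq0.le) _)),
    Real.sqrt_mul (sq_nonneg _), Real.sqrt_sq hC,
    sqrt_pow' (mul_nonneg hp0.le hq0.le),
    sqrt_pow' (mul_nonneg h1p h1q)]

lemma inner_general {n : ℕ} (P : ℕ → Prop) [DecidablePred P] {p q φ Np Nq : ℝ}
    (hp0 : 0 < p) (hp1 : p < 1) (hq0 : 0 < q) (hq1 : q < 1)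
    (hNp : 0 < Np) (hNq : 0 < Nq) :
    innerC
      (∑ j ∈ (Finset.range (n + 1)).filter P,
        (Complex.exp (Complex.I * φ * j) *
          (Real.sqrt ((n.choose j : ℝ) * q ^ (n - j) * (1 - q) ^ j / Nq) : ℂ)) • vJ n j)
      (∑ j ∈ (Finset.range (n + 1)).filter P,
        (Complex.exp (Complex.I * ((0:ℝ):ℂ) * j) *
          (Real.sqrt ((n.choose j : ℝ) * p ^ (n - j) * (1 - p) ^ j / Np) : ℂ)) • vJ n j)
    = (∑ j ∈ (Finset.range (n + 1)).filter P,
        (n.choose j : ℂ) * ((Real.sqrt (p * q) : ℝ) : ℂ) ^ (n - j) *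
          (Complex.exp (-(Complex.I * φ)) * ((Real.sqrt ((1 - p) * (1 - q)) : ℝ) : ℂ)) ^ j)
      / ((Real.sqrt (Nq * Np) : ℝ) : ℂ) := by
  rw [innerC_diag _ (Finset.filter_subset _ _), Finset.sum_div]
  refine Finset.sum_congr rfl fun j hj => ?_
  have hjn : j ≤ n := by
    have h1 := Finset.mem_filter.mp hj
    have := Finset.mem_range.mp h1.1
    omega
  rw [RingHom.map_mul, ← Complex.exp_conj]
  have hconj : (starRingEnd ℂ) (Complex.I * φ * j) = (j : ℂ) * -(Complex.I * φ) := by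
    simp [Complex.conj_I]
    ring
  rw [hconj, Complex.conj_ofReal, Complex.exp_nat_mul]
  have hz : (Complex.exp (-(Complex.I * φ)) * ((Real.sqrt ((1 - p) * (1 - q)) : ℝ) : ℂ)) ^ j
      = Complex.exp (-(Complex.I * φ)) ^ j * ((Real.sqrt ((1 - p) * (1 - q)) ^ j : ℝ) : ℂ) := by
    push_cast
    ring
  rw [hz, Complex.ofReal_zero, mul_zero, zero_mul, Complex.exp_zero, one_mul]
  rw [mul_assoc, ← Complex.ofReal_mul, coeff_prod hp0 hp1 hq0 hq1 hNp hNq hjn]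
  push_cast
  ring

lemma pow_bounds {r : ℝ} (h0 : 0 < r) (h1 : r < 1) {n : ℕ} (hn : 1 ≤ n) :
    -1 < (2*r-1)^n ∧ (2*r-1)^n < 1 := by
  have habs : |2*r-1| < 1 := abs_lt.mpr ⟨by linarith, by linarith⟩
  have : |(2*r-1)^n| < 1 := by
    rw [_root_.abs_pow]
    exact pow_lt_one₀ (abs_nonneg _) habs (by omega)
  exact abs_lt.mp this

lemma denom_eq {X Y : ℝ} (hX : 0 < X) (hY : 0 < Y) (A : ℂ) :
    A / 2 / ((Real.sqrt (Y/2 * (X/2)) : ℝ) : ℂ) = A / ((Real.sqrt (X * Y) : ℝ) : ℂ) := by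
  have h4 : Real.sqrt 4 = 2 := by
    rw [show (4:ℝ) = 2^2 by norm_num, Real.sqrt_sq (by norm_num)]
  have hs : Real.sqrt (Y/2 * (X/2)) = Real.sqrt (X * Y) / 2 := by
    rw [show Y/2 * (X/2) = X * Y / 4 by ring, Real.sqrt_div (by positivity), h4]
  rw [hs]
  have hne : ((Real.sqrt (X * Y) : ℝ) : ℂ) ≠ 0 := by
    simp only [ne_eq, Complex.ofReal_eq_zero]
    positivity
  push_cast
  field_simp

/-- Overlaps of the normalized even- and odd-parity components of the
n-fold powers of √p|0⟩+√(1-p)|1⟩ and √q|0⟩+e^{iφ}√(1-q)|1⟩: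
⟨0_q|0_p⟩ = ((μ₁+e^{−iφ}μ₂)^n + (μ₁−e^{−iφ}μ₂)^n)/√((1+Δp^n)(1+Δq^n)) and
⟨1_q|1_p⟩ = ((μ₁+e^{−iφ}μ₂)^n − (μ₁−e^{−iφ}μ₂)^n)/√((1−Δp^n)(1−Δq^n)),
with μ₁ = √(pq), μ₂ = √((1−p)(1−q)). -/
theorem parity_component_overlaps (p q φ : ℝ) (hp : p ∈ Set.Ioo (0 : ℝ) 1)
    (hq : q ∈ Set.Ioo (0 : ℝ) 1) (hφ : φ ∈ Set.Ico (0 : ℝ) (2 * Real.pi))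
    (n : ℕ) (hn : 1 ≤ n) :
    innerC (evenVec n q φ) (evenVec n p 0) =
      (((Real.sqrt (p * q) : ℂ) +
          Complex.exp (-(Complex.I * φ)) * (Real.sqrt ((1 - p) * (1 - q)) : ℂ)) ^ n +
        ((Real.sqrt (p * q) : ℂ) -
          Complex.exp (-(Complex.I * φ)) * (Real.sqrt ((1 - p) * (1 - q)) : ℂ)) ^ n) /
      ((Real.sqrt ((1 + (2 * p - 1) ^ n) * (1 + (2 * q - 1) ^ n)) : ℝ) : ℂ) ∧
    innerC (oddVec n q φ) (oddVec n p 0) =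
      (((Real.sqrt (p * q) : ℂ) +
          Complex.exp (-(Complex.I * φ)) * (Real.sqrt ((1 - p) * (1 - q)) : ℂ)) ^ n -
        ((Real.sqrt (p * q) : ℂ) -
          Complex.exp (-(Complex.I * φ)) * (Real.sqrt ((1 - p) * (1 - q)) : ℂ)) ^ n) /
      ((Real.sqrt ((1 - (2 * p - 1) ^ n) * (1 - (2 * q - 1) ^ n)) : ℝ) : ℂ) := by
  obtain ⟨hp0, hp1⟩ := hp
  obtain ⟨hq0, hq1⟩ := hq
  obtain ⟨hpl, hpu⟩ := pow_bounds hp0 hp1 hn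
  obtain ⟨hql, hqu⟩ := pow_bounds hq0 hq1 hn
  constructor
  · have h := inner_general (n := n) (fun j => Even j) (φ := φ)
      hp0 hp1 hq0 hq1
      (Np := (1 + (2*p-1)^n)/2) (Nq := (1 + (2*q-1)^n)/2)
      (by linarith) (by linarith)
    rw [evenVec, evenVec, h, binom_even,
      denom_eq (by linarith : (0:ℝ) < 1 + (2*p-1)^n) (by linarith)]
  · have h := inner_general (n := n) (fun j => Odd j) (φ := φ)
      hp0 hp1 hq0 hq1
      (Np := (1 - (2*p-1)^n)/2) (Nq := (1 - (2*q-1)^n)/2)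
      (by linarith) (by linarith)
    rw [oddVec, oddVec, h, binom_odd,
      denom_eq (by linarith : (0:ℝ) < 1 - (2*p-1)^n) (by linarith)]
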